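/- For any type x, the double dual is equivalent to x: Det(x̄̄) = Det(x), where x̄ := x → I. Concretely, λ_{(x→I)→I} = λ_x and Δ_{(x→I)→I} = Δ_x. -/

import Mathlib

open Matrix Kronecker
open scoped ComplexOrder

/-- Types of higher-order quantum theory. The trivial type `I` is `elem 1`. -/
inductive QT where
  | elem (n : ℕ)
  | arrow (x y : QT)

/-- The index type of the Hilbert space `H_x` associated to a type `x`. -/
def Idx : QT → Type
  | .elem n => Fin n
  | .arrow x y => Idx x × Idx y

instance idxFintype : (x : QT) → Fintype (Idx x)
  | .elem n => inferInstanceAs (Fintype (Fin n))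
  | .arrow x y =>
      letI := idxFintype x; letI := idxFintype y
      inferInstanceAs (Fintype (Idx x × Idx y))

instance idxDecEq : (x : QT) → DecidableEq (Idx x)
  | .elem n => inferInstanceAs (DecidableEq (Fin n))
  | .arrow x y =>
      letI := idxDecEq x; letI := idxDecEq y
      inferInstanceAs (DecidableEq (Idx x × Idx y))

/-- Partial trace over the first tensor factor. -/
noncomputable def ptrA {ι κ : Type} [Fintype ι]
    (M : Matrix (ι × κ) (ι × κ) ℂ) : Matrix κ κ ℂ :=
  fun k l => ∑ i : ι, M (i, k) (i, l)

/-- Deterministic events of type `x`, defined recursively: for elementary types,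
positive unit-trace operators; for `x → y`, positive operators `R` such that
`Tr_x[(Sᵀ ⊗ 1) R] ∈ Det y` for every `S ∈ Det x`. -/
noncomputable def Det : (x : QT) → Set (Matrix (Idx x) (Idx x) ℂ)
  | .elem n => {R | R.PosSemidef ∧ R.trace = 1}
  | .arrow x y =>
      setOf (fun (R : Matrix (Idx x × Idx y) (Idx x × Idx y) ℂ) =>
        R.PosSemidef ∧
        ∀ S ∈ Det x, ptrA ((Sᵀ ⊗ₖ (1 : Matrix (Idx y) (Idx y) ℂ)) * R) ∈ Det y)

/-- The real subspace of Hermitian operators. -/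
noncomputable def hermSub (ι : Type) [Fintype ι] [DecidableEq ι] :
    Submodule ℝ (Matrix ι ι ℂ) where
  carrier := {X | X.IsHermitian}
  add_mem' := fun ha hb => ha.add hb
  zero_mem' := Matrix.isHermitian_zero
  smul_mem' := fun c X hX => by
    show ((c • X)ᴴ = c • X)
    rw [Matrix.conjTranspose_smul, star_trivial, hX.eq]

/-- The real subspace of traceless Hermitian operators. -/
noncomputable def tlHermSub (ι : Type) [Fintype ι] [DecidableEq ι] :
    Submodule ℝ (Matrix ι ι ℂ) where
  carrier := {X | X.IsHermitian ∧ X.trace = 0}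
  add_mem' := fun ha hb => ⟨ha.1.add hb.1, by rw [trace_add, ha.2, hb.2, add_zero]⟩
  zero_mem' := ⟨Matrix.isHermitian_zero, Matrix.trace_zero ι ℂ⟩
  smul_mem' := fun c X hX =>
    ⟨by show ((c • X)ᴴ = c • X)
        rw [Matrix.conjTranspose_smul, star_trivial, hX.1.eq],
     by rw [trace_smul, hX.2, smul_zero]⟩

/-- The Hilbert–Schmidt orthogonal complement of `S` inside `B`. -/
noncomputable def perpWithin {ι : Type} [Fintype ι] [DecidableEq ι]
    (S B : Submodule ℝ (Matrix ι ι ℂ)) : Submodule ℝ (Matrix ι ι ℂ) where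
  carrier := {Z | Z ∈ B ∧ ∀ Y ∈ S, (Y * Z).trace = 0}
  add_mem' := fun ha hb =>
    ⟨B.add_mem ha.1 hb.1, fun Y hY => by
      rw [mul_add, trace_add, ha.2 Y hY, hb.2 Y hY, add_zero]⟩
  zero_mem' := ⟨B.zero_mem, fun Y _ => by simp⟩
  smul_mem' := fun c Z hZ =>
    ⟨B.smul_mem c hZ.1, fun Y hY => by
      rw [Matrix.mul_smul, trace_smul, hZ.2 Y hY, smul_zero]⟩

/-- Tensor product of operator subspaces, spanned by Kronecker products. -/
noncomputable def tensorSub {ι κ : Type} [Fintype ι] [DecidableEq ι]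
    [Fintype κ] [DecidableEq κ]
    (P : Submodule ℝ (Matrix ι ι ℂ)) (Q : Submodule ℝ (Matrix κ κ ℂ)) :
    Submodule ℝ (Matrix (ι × κ) (ι × κ) ℂ) :=
  Submodule.span ℝ {A | ∃ X ∈ P, ∃ Y ∈ Q, A = X ⊗ₖ Y}

/-- The one-dimensional subspace `L_e` spanned by the identity. -/
noncomputable def idSub (ι : Type) [Fintype ι] [DecidableEq ι] :
    Submodule ℝ (Matrix ι ι ℂ) :=
  Submodule.span ℝ {(1 : Matrix ι ι ℂ)}

/-- The subspace `Δ_x` of traceless Hermitian operators characterizing the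
deterministic events of type `x`:
`Δ_A = Traceless(H_A)` for elementary `A`, and
`Δ_{x→y} = [Herm(H_x) ⊗ Δ_y] ⊕ [Δ̄_x ⊗ Δ_y^⊥]`, where `Δ̄_x` is the complement of
`Δ_x` inside the traceless Hermitian operators and `Δ_y^⊥` its orthogonal
complement inside the Hermitian operators. -/
noncomputable def Delta : (x : QT) → Submodule ℝ (Matrix (Idx x) (Idx x) ℂ)
  | .elem n => tlHermSub (Fin n)
  | .arrow x y =>
      (tensorSub (hermSub (Idx x)) (Delta y) ⊔
        tensorSub (perpWithin (Delta x) (tlHermSub (Idx x)))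
          (perpWithin (Delta y) (hermSub (Idx y))) :
        Submodule ℝ (Matrix (Idx x × Idx y) (Idx x × Idx y) ℂ))

/-- The normalization constant `λ_x`: `λ_A = 1/d_A`, `λ_{x→y} = λ_y/(d_x λ_x)`. -/
noncomputable def lam : QT → ℝ
  | .elem n => 1 / n
  | .arrow x y => lam y / (Fintype.card (Idx x) * lam x)


section DoubleDualHelpers

open Matrix

variable {ι κ μ : Type} [Fintype ι] [DecidableEq ι] [Fintype κ] [DecidableEq κ]
  [Fintype μ] [DecidableEq μ]

/-- Reindexing along an equiv, as a real-linear map on complex matrices. -/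
noncomputable abbrev rle (e : ι ≃ κ) : Matrix ι ι ℂ →ₗ[ℝ] Matrix κ κ ℂ :=
  (Matrix.reindexLinearEquiv ℝ ℂ e e).toLinearMap

lemma rle_apply (e : ι ≃ κ) (M : Matrix ι ι ℂ) : rle e M = M.submatrix e.symm e.symm := rfl

lemma trace_rle (e : ι ≃ κ) (M : Matrix ι ι ℂ) : (rle e M).trace = M.trace := by
  simp only [rle_apply, Matrix.trace, Matrix.diag_apply, Matrix.submatrix_apply]
  exact Equiv.sum_comp e.symm fun i => M i i

lemma rle_mul (e : ι ≃ κ) (M N : Matrix ι ι ℂ) : rle e M * rle e N = rle e (M * N) := by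
  simp only [rle_apply]
  exact Matrix.submatrix_mul_equiv M N _ e.symm _

lemma isHermitian_rle {M : Matrix ι ι ℂ} (e : ι ≃ κ) (h : M.IsHermitian) :
    (rle e M).IsHermitian := by
  have h2 : rle e M = Matrix.reindex e e M := rfl
  rw [Matrix.IsHermitian, h2, Matrix.conjTranspose_reindex, h.eq]

lemma mem_hermSub {X : Matrix ι ι ℂ} : X ∈ hermSub ι ↔ X.IsHermitian := Iff.rfl

lemma mem_tlHermSub {X : Matrix ι ι ℂ} :
    X ∈ tlHermSub ι ↔ X.IsHermitian ∧ X.trace = 0 := Iff.rfl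

lemma mem_perpWithin {S B : Submodule ℝ (Matrix ι ι ℂ)} {Z : Matrix ι ι ℂ} :
    Z ∈ perpWithin S B ↔ Z ∈ B ∧ ∀ Y ∈ S, (Y * Z).trace = 0 := Iff.rfl

lemma tl_le_herm : tlHermSub ι ≤ hermSub ι := fun _ hX => hX.1

lemma perpWithin_le {S B : Submodule ℝ (Matrix ι ι ℂ)} : perpWithin S B ≤ B :=
  fun _ hZ => hZ.1

lemma trace_mul_real {Y Z : Matrix ι ι ℂ} (hY : Y.IsHermitian) (hZ : Z.IsHermitian) :
    (Y * Z).trace = (((Y * Z).trace).re : ℂ) := by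
  have h1 : star ((Y * Z).trace) = (Y * Z).trace := by
    rw [← Matrix.trace_conjTranspose, Matrix.conjTranspose_mul, hY.eq, hZ.eq,
      Matrix.trace_mul_comm]
  exact (Complex.conj_eq_iff_re.mp h1).symm

/-- The (real) Hilbert–Schmidt bilinear form on a subspace of matrices. -/
noncomputable def hsForm (B : Submodule ℝ (Matrix ι ι ℂ)) : LinearMap.BilinForm ℝ B :=
  LinearMap.mk₂ ℝ (fun Y Z => ((Y.val * Z.val).trace).re)
    (fun Y Y' Z => by
      simp [add_mul, Matrix.trace_add])
    (fun c Y Z => by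
      simp [Matrix.smul_mul, Matrix.trace_smul, Complex.smul_re])
    (fun Y Z Z' => by
      simp [mul_add, Matrix.trace_add])
    (fun c Y Z => by
      simp [Matrix.mul_smul, Matrix.trace_smul, Complex.smul_re])

lemma hsForm_apply (B : Submodule ℝ (Matrix ι ι ℂ)) (Y Z : B) :
    hsForm B Y Z = ((Y.val * Z.val).trace).re := rfl

lemma hsForm_isRefl (B : Submodule ℝ (Matrix ι ι ℂ)) : (hsForm B).IsRefl := by
  intro Y Z h
  rw [hsForm_apply, Matrix.trace_mul_comm]
  exact h

lemma hsForm_nondeg {B : Submodule ℝ (Matrix ι ι ℂ)} (hB : B ≤ hermSub ι) :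
    (hsForm B).Nondegenerate := by
  refine (LinearMap.IsRefl.nondegenerate_iff_separatingLeft (hsForm_isRefl B)).2 ?_
  intro Y h
  have hY : (Y : Matrix ι ι ℂ).IsHermitian := hB Y.2
  have h0 : ((Y.val * Y.val).trace).re = 0 := h Y
  have e1 : (Y.val * Y.val).trace = ((∑ i, ∑ j, Complex.normSq (Y.val i j) : ℝ) : ℂ) := by
    push_cast
    rw [Matrix.trace]
    refine Finset.sum_congr rfl fun i _ => ?_
    rw [Matrix.diag_apply, Matrix.mul_apply]
    refine Finset.sum_congr rfl fun j _ => ?_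
    rw [show Y.val j i = star (Y.val i j) from (hY.apply j i).symm]
    exact Complex.mul_conj _
  rw [e1, Complex.ofReal_re] at h0
  have h2 := (Finset.sum_eq_zero_iff_of_nonneg
    (fun i _ => Finset.sum_nonneg fun j _ => Complex.normSq_nonneg _)).mp h0
  have h3 : ∀ i j, Complex.normSq (Y.val i j) = 0 := fun i j =>
    (Finset.sum_eq_zero_iff_of_nonneg (fun j _ => Complex.normSq_nonneg _)).mp
      (h2 i (Finset.mem_univ i)) j (Finset.mem_univ j)
  have h4 : Y.val = 0 := Matrix.ext fun i j => Complex.normSq_eq_zero.mp (h3 i j)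
  exact Subtype.ext h4

lemma perpWithin_eq (B S : Submodule ℝ (Matrix ι ι ℂ)) (hB : B ≤ hermSub ι)
    (hSB : S ≤ B) :
    perpWithin S B =
      Submodule.map B.subtype ((hsForm B).orthogonal (S.comap B.subtype)) := by
  ext Z
  constructor
  · rintro ⟨hZB, h⟩
    refine ⟨⟨Z, hZB⟩, ?_, rfl⟩
    intro n hn
    show ((n.val * Z).trace).re = 0
    rw [h n.val hn, Complex.zero_re]
  · rintro ⟨⟨Z, hZB⟩, hor, rfl⟩
    refine ⟨hZB, fun Y hY => ?_⟩
    show (Y * Z).trace = 0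
    have h0 : ((Y * Z).trace).re = 0 := hor ⟨Y, hSB hY⟩ hY
    rw [trace_mul_real (hB (hSB hY)) (hB hZB), h0, Complex.ofReal_zero]

lemma perpWithin_perpWithin (B S : Submodule ℝ (Matrix ι ι ℂ)) (hB : B ≤ hermSub ι)
    (hSB : S ≤ B) : perpWithin (perpWithin S B) B = S := by
  haveI : FiniteDimensional ℝ (Matrix ι ι ℂ) := Module.Finite.matrix
  rw [perpWithin_eq B (perpWithin S B) hB perpWithin_le, perpWithin_eq B S hB hSB,
    Submodule.comap_map_eq_of_injective (Submodule.injective_subtype B),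
    LinearMap.BilinForm.orthogonal_orthogonal (hsForm_nondeg hB) (hsForm_isRefl B),
    Submodule.map_comap_subtype, inf_eq_right.mpr hSB]

lemma isHermitian_kron {X : Matrix ι ι ℂ} {Y : Matrix κ κ ℂ}
    (hX : X.IsHermitian) (hY : Y.IsHermitian) : (X ⊗ₖ Y).IsHermitian := by
  show (X ⊗ₖ Y)ᴴ = X ⊗ₖ Y
  ext ⟨i, a⟩ ⟨j, b⟩
  simp only [Matrix.conjTranspose_apply, Matrix.kroneckerMap_apply, star_mul']
  rw [hX.apply i j, hY.apply a b]

lemma tensorSub_le {P : Submodule ℝ (Matrix ι ι ℂ)} {Q : Submodule ℝ (Matrix κ κ ℂ)}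
    {W : Submodule ℝ (Matrix (ι × κ) (ι × κ) ℂ)}
    (h : ∀ X ∈ P, ∀ Y ∈ Q, X ⊗ₖ Y ∈ W) : tensorSub P Q ≤ W := by
  refine Submodule.span_le.2 ?_
  rintro A ⟨X, hX, Y, hY, rfl⟩
  exact h X hX Y hY

lemma Delta_le_tl : ∀ x : QT, Delta x ≤ tlHermSub (Idx x)
  | QT.elem n => le_rfl
  | QT.arrow x y => by
      refine sup_le (tensorSub_le fun X hX Y hY => ?_) (tensorSub_le fun X hX Y hY => ?_)
      · have hY' := Delta_le_tl y hY
        exact ⟨isHermitian_kron hX hY'.1, (Matrix.trace_kronecker X Y).trans (by rw [hY'.2, mul_zero])⟩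
      · exact ⟨isHermitian_kron hX.1.1 hY.1,
          (Matrix.trace_kronecker X Y).trans (by rw [hX.1.2, zero_mul])⟩

lemma map_tlHermSub (e : ι ≃ κ) : (tlHermSub ι).map (rle e) = tlHermSub κ := by
  ext Z
  simp only [Submodule.mem_map]
  constructor
  · rintro ⟨Y, hY, rfl⟩
    exact ⟨isHermitian_rle e hY.1, by rw [trace_rle, hY.2]⟩
  · intro hZ
    refine ⟨rle e.symm Z, ⟨isHermitian_rle e.symm hZ.1, by rw [trace_rle, hZ.2]⟩, ?_⟩
    show rle e (rle e.symm Z) = Z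
    ext i j
    simp [rle_apply, Matrix.submatrix_apply]

lemma map_perpWithin (e : ι ≃ κ) (S B : Submodule ℝ (Matrix ι ι ℂ)) :
    (perpWithin S B).map (rle e) = perpWithin (S.map (rle e)) (B.map (rle e)) := by
  ext Z
  constructor
  · rintro ⟨Y, hY, rfl⟩
    obtain ⟨hYB, h⟩ := mem_perpWithin.1 hY
    refine ⟨Submodule.mem_map_of_mem hYB, ?_⟩
    rintro _ ⟨W, hW, rfl⟩
    show (rle e W * rle e Y).trace = 0
    rw [rle_mul, trace_rle]
    exact h W hW
  · rintro ⟨hZB, h⟩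
    obtain ⟨Y, hYB, rfl⟩ := hZB
    refine ⟨Y, ⟨hYB, fun W hW => ?_⟩, rfl⟩
    have h1 := h (rle e W) (Submodule.mem_map_of_mem hW)
    rwa [rle_mul, trace_rle] at h1

lemma tl_fin_one : tlHermSub (Fin 1) = ⊥ := by
  rw [eq_bot_iff]
  rintro X hX
  obtain ⟨-, h⟩ := mem_tlHermSub.1 hX
  rw [Matrix.trace_fin_one] at h
  refine (Submodule.mem_bot ℝ).2 ?_
  ext i j
  rw [Subsingleton.elim i 0, Subsingleton.elim j 0]
  simpa using h

lemma tensorSub_bot (P : Submodule ℝ (Matrix ι ι ℂ)) :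
    tensorSub P (⊥ : Submodule ℝ (Matrix κ κ ℂ)) = ⊥ := by
  rw [eq_bot_iff]
  refine tensorSub_le fun X hX Y hY => ?_
  rw [(Submodule.mem_bot ℝ).1 hY]
  simp

lemma perpWithin_bot (B : Submodule ℝ (Matrix ι ι ℂ)) : perpWithin ⊥ B = B := by
  ext Z
  constructor
  · exact fun h => h.1
  · intro h
    refine ⟨h, fun Y hY => ?_⟩
    rw [(Submodule.mem_bot ℝ).1 hY, Matrix.zero_mul, Matrix.trace_zero]

lemma tensorSub_hermOne (P : Submodule ℝ (Matrix ι ι ℂ)) :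
    tensorSub P (hermSub (Fin 1)) = P.map (rle (Equiv.prodUnique ι (Fin 1)).symm) := by
  apply le_antisymm
  · refine tensorSub_le fun X hX Y hY => ?_
    have hYh : Y.IsHermitian := hY
    have h00 : Y 0 0 = ((Y 0 0).re : ℂ) := (Complex.conj_eq_iff_re.mp (hYh.apply 0 0)).symm
    have key : X ⊗ₖ Y = ((Y 0 0).re : ℝ) • (rle (Equiv.prodUnique ι (Fin 1)).symm X) := by
      ext ⟨i, a⟩ ⟨j, b⟩
      have ha : a = 0 := Subsingleton.elim a 0
      have hb : b = 0 := Subsingleton.elim b 0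
      subst ha; subst hb
      simp only [Matrix.kroneckerMap_apply, Matrix.smul_apply, rle_apply,
        Matrix.submatrix_apply, Equiv.symm_symm, Equiv.coe_prodUnique]
      rw [Complex.real_smul, ← h00]
      ring
    rw [key]
    exact Submodule.smul_mem _ _ (Submodule.mem_map_of_mem hX)
  · rintro _ ⟨X, hX, rfl⟩
    have key : rle (Equiv.prodUnique ι (Fin 1)).symm X
        = X ⊗ₖ (1 : Matrix (Fin 1) (Fin 1) ℂ) := by
      ext ⟨i, a⟩ ⟨j, b⟩
      have ha : a = 0 := Subsingleton.elim a 0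
      have hb : b = 0 := Subsingleton.elim b 0
      subst ha; subst hb
      simp [rle_apply, Matrix.submatrix_apply, Matrix.kroneckerMap_apply,
        Matrix.one_apply]
    rw [key]
    exact Submodule.subset_span ⟨X, hX, 1, Matrix.isHermitian_one, rfl⟩

lemma Delta_elem_one : Delta (QT.elem 1) = ⊥ := tl_fin_one

lemma Delta_arrow_one (z : QT) :
    Delta (QT.arrow z (QT.elem 1)) =
      (perpWithin (Delta z) (tlHermSub (Idx z))).map
        (rle (Equiv.prodUnique (Idx z) (Fin 1)).symm) := by
  have h1 : Delta (QT.arrow z (QT.elem 1)) =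
      tensorSub (hermSub (Idx z)) (tlHermSub (Fin 1)) ⊔
        tensorSub (perpWithin (Delta z) (tlHermSub (Idx z)))
          (perpWithin (tlHermSub (Fin 1)) (hermSub (Fin 1))) := rfl
  rw [h1, tl_fin_one, tensorSub_bot, bot_sup_eq, perpWithin_bot, tensorSub_hermOne]

lemma lam_eq_zero : ∀ x : QT, Fintype.card (Idx x) = 0 → lam x = 0
  | QT.elem n => fun h => by
      have hn : Fintype.card (Idx (QT.elem n)) = n := Fintype.card_fin n
      rw [hn] at h
      subst h
      simp [lam]
  | QT.arrow x y => fun h => by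
      have hp : Fintype.card (Idx (QT.arrow x y))
          = Fintype.card (Idx x) * Fintype.card (Idx y) := Fintype.card_prod _ _
      rw [hp] at h
      rcases Nat.mul_eq_zero.mp h with hx | hy
      · have := lam_eq_zero x hx
        simp [lam, this]
      · have := lam_eq_zero y hy
        simp [lam, this]

end DoubleDualHelpers

/-- The double dual `x̄̄ := (x → I) → I` is equivalent to `x`:
`λ_{(x→I)→I} = λ_x` and `Δ_{(x→I)→I} = Δ_x` (transported along the canonical
identification `(H_x ⊗ ℂ) ⊗ ℂ ≃ H_x`), hence `Det(x̄̄) = Det(x)`. -/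
theorem double_dual_equiv (x : QT) :
    lam (QT.arrow (QT.arrow x (QT.elem 1)) (QT.elem 1)) = lam x ∧
    Delta (QT.arrow (QT.arrow x (QT.elem 1)) (QT.elem 1)) =
      Submodule.map
        (Matrix.reindexLinearEquiv ℝ ℂ
          (((Equiv.prodUnique (Idx x × Fin 1) (Fin 1)).trans
              (Equiv.prodUnique (Idx x) (Fin 1))).symm)
          (((Equiv.prodUnique (Idx x × Fin 1) (Fin 1)).trans
              (Equiv.prodUnique (Idx x) (Fin 1))).symm)).toLinearMap
        (Delta x) := by
  constructor
  · -- the `lam` part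
    have hcard1 : Fintype.card (Idx (QT.arrow x (QT.elem 1))) = Fintype.card (Idx x) :=
      Fintype.card_congr (Equiv.prodUnique (Idx x) (Fin 1))
    simp only [lam]
    rw [hcard1]
    set d : ℝ := (Fintype.card (Idx x) : ℝ) with hd
    set l : ℝ := lam x with hl
    by_cases h0 : l = 0
    · simp [h0]
    · have hdne : d ≠ 0 := by
        rw [hd]
        intro hzero
        exact h0 (lam_eq_zero x (by exact_mod_cast hzero))
      field_simp
  · -- the `Delta` part
    have hD1 : Delta (QT.arrow x (QT.elem 1)) =
        (perpWithin (Delta x) (tlHermSub (Idx x))).map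
          (rle (Equiv.prodUnique (Idx x) (Fin 1)).symm) := Delta_arrow_one x
    have hD2 : Delta (QT.arrow (QT.arrow x (QT.elem 1)) (QT.elem 1)) =
        (perpWithin (Delta (QT.arrow x (QT.elem 1))) (tlHermSub (Idx x × Fin 1))).map
          (rle (Equiv.prodUnique (Idx x × Fin 1) (Fin 1)).symm) :=
      Delta_arrow_one (QT.arrow x (QT.elem 1))
    have hcomp : (rle (Equiv.prodUnique (Idx x × Fin 1) (Fin 1)).symm) ∘ₗ
        (rle (Equiv.prodUnique (Idx x) (Fin 1)).symm) =
        rle (((Equiv.prodUnique (Idx x × Fin 1) (Fin 1)).trans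
          (Equiv.prodUnique (Idx x) (Fin 1))).symm) := by
      apply LinearMap.ext
      intro M
      ext p q
      simp [rle_apply, Matrix.submatrix_apply]
    rw [hD2, hD1, ← map_tlHermSub ((Equiv.prodUnique (Idx x) (Fin 1)).symm)]
    erw [← map_perpWithin]
    rw [ perpWithin_perpWithin _ _ tl_le_herm (Delta_le_tl x)]
    exact (Submodule.map_comp _ _ _).symm.trans
      (congrArg (fun f => Submodule.map f (Delta x)) hcomp)
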